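/- arXiv:1011.6325 — 2 statements merged into one kernel-verified Lean document; each statement's English description precedes it below -/
import Mathlib

section
/- Let A, B be positive definite Hermitian matrices, C, D positive semidefinite Hermitian matrices, and X a Hermitian matrix. Then Tr(X A⁻¹ X B⁻¹) − Tr(X (A+C)⁻¹ X (B+D)⁻¹) ≥ 0. -/
open Matrix ComplexOrder

/-- Trace of a positive semidefinite matrix is nonnegative. -/
lemma psd_trace_nonneg {m : ℕ} {P : Matrix (Fin m) (Fin m) ℂ} (hP : P.PosSemidef) :
    0 ≤ P.trace := by
  rw [Matrix.trace]
  apply Finset.sum_nonneg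
  intro i _
  have := hP.dotProduct_mulVec_nonneg (Pi.single i 1)
  simpa [Matrix.mulVec_single, dotProduct, Pi.single_apply, Finset.sum_ite_eq',
    Matrix.diag] using this

open scoped MatrixOrder in
/-- Trace of a product of two positive semidefinite matrices is nonnegative. -/
lemma psd_trace_mul_nonneg {m : ℕ} {P Q : Matrix (Fin m) (Fin m) ℂ}
    (hP : P.PosSemidef) (hQ : Q.PosSemidef) : 0 ≤ (P * Q).trace := by
  have hS := (CFC.sqrt_nonneg Q).posSemidef
  have hSS : CFC.sqrt Q * CFC.sqrt Q = Q := CFC.sqrt_mul_sqrt_self Q hQ.nonneg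
  have h1 : (P * Q).trace = (CFC.sqrt Q * P * CFC.sqrt Q).trace := by
    conv_lhs => rw [← hSS]
    rw [← Matrix.mul_assoc, Matrix.trace_mul_cycle]
  rw [h1]
  have : ((CFC.sqrt Q)ᴴ * P * CFC.sqrt Q).PosSemidef := hP.conjTranspose_mul_mul_same _
  rw [hS.isHermitian.eq] at this
  exact psd_trace_nonneg this

/-- `A⁻¹ - (A+C)⁻¹` is positive semidefinite. -/
lemma inv_sub_inv_psd {m : ℕ} {A C : Matrix (Fin m) (Fin m) ℂ}
    (hA : A.PosDef) (hC : C.PosSemidef) : (A⁻¹ - (A + C)⁻¹).PosSemidef := by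
  have hAC : (A + C).PosDef := hA.add_posSemidef hC
  have e2 : (A + C) * (A + C)⁻¹ = 1 := Matrix.mul_nonsing_inv _ hAC.det_pos.ne'.isUnit
  have e1 : (A + C)⁻¹ * (A + C) = 1 := Matrix.nonsing_inv_mul _ hAC.det_pos.ne'.isUnit
  have e4 : A⁻¹ * A = 1 := Matrix.nonsing_inv_mul _ hA.det_pos.ne'.isUnit
  have e3 : A * A⁻¹ = 1 := Matrix.mul_nonsing_inv _ hA.det_pos.ne'.isUnit
  have key : A⁻¹ - (A + C)⁻¹ = (A + C)⁻¹ * (C + C * A⁻¹ * C) * (A + C)⁻¹ := by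
    have h5 : C + C * A⁻¹ * C = C * A⁻¹ * (A + C) := by
      rw [Matrix.mul_add, Matrix.mul_assoc C A⁻¹ A, e4, Matrix.mul_one]
    rw [h5, Matrix.mul_assoc, Matrix.mul_assoc, e2, Matrix.mul_one, ← Matrix.mul_assoc]
    calc A⁻¹ - (A + C)⁻¹
        = (A + C)⁻¹ * (A + C) * A⁻¹ - (A + C)⁻¹ * (A * A⁻¹) := by
          rw [e1, e3, Matrix.one_mul, Matrix.mul_one]
      _ = (A + C)⁻¹ * C * A⁻¹ := by
          rw [← Matrix.mul_assoc, ← Matrix.sub_mul, ← Matrix.mul_sub,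
            add_sub_cancel_left]
  rw [key]
  have hE : (C + C * A⁻¹ * C).PosSemidef := by
    apply hC.add
    have := hA.inv.posSemidef.conjTranspose_mul_mul_same C
    rwa [hC.isHermitian.eq] at this
  have := hE.conjTranspose_mul_mul_same ((A + C)⁻¹)
  rwa [hAC.inv.isHermitian.eq] at this

theorem stmt_4 {n : ℕ} (A B C D X : Matrix (Fin n) (Fin n) ℂ)
    (hA : A.PosDef) (hB : B.PosDef) (hC : C.PosSemidef) (hD : D.PosSemidef)
    (hX : X.IsHermitian) :
    0 ≤ (X * A⁻¹ * X * B⁻¹).trace - (X * (A + C)⁻¹ * X * (B + D)⁻¹).trace := by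
  have h1 : (X * (A⁻¹ - (A + C)⁻¹) * X).PosSemidef := by
    have := (inv_sub_inv_psd hA hC).conjTranspose_mul_mul_same X
    rwa [hX.eq] at this
  have h2 : (X * (A + C)⁻¹ * X).PosSemidef := by
    have := (hA.add_posSemidef hC).inv.posSemidef.conjTranspose_mul_mul_same X
    rwa [hX.eq] at this
  have t1 : 0 ≤ ((X * (A⁻¹ - (A + C)⁻¹) * X) * B⁻¹).trace :=
    psd_trace_mul_nonneg h1 hB.inv.posSemidef
  have t2 : 0 ≤ ((X * (A + C)⁻¹ * X) * (B⁻¹ - (B + D)⁻¹)).trace :=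
    psd_trace_mul_nonneg h2 (inv_sub_inv_psd hB hD)
  have key : (X * A⁻¹ * X * B⁻¹).trace - (X * (A + C)⁻¹ * X * (B + D)⁻¹).trace
      = ((X * (A⁻¹ - (A + C)⁻¹) * X) * B⁻¹).trace
        + ((X * (A + C)⁻¹ * X) * (B⁻¹ - (B + D)⁻¹)).trace := by
    simp only [Matrix.mul_sub, Matrix.sub_mul, Matrix.trace_sub, Matrix.trace_add]
    ring
  rw [key]
  exact add_nonneg t1 t2
end

section
/- Let A, B be positive definite Hermitian matrices and C, D positive semidefinite Hermitian matrices. Then Tr((A−B)(B⁻¹−A⁻¹) + (C−D)((B+D)⁻¹ − (A+C)⁻¹)) ≥ 0. -/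
open Matrix ComplexOrder

section Aux

variable {n : ℕ}

private lemma trace_nonneg' {M : Matrix (Fin n) (Fin n) ℂ} (hM : M.PosSemidef) :
    0 ≤ M.trace := by
  rw [Matrix.trace]
  refine Finset.sum_nonneg fun i _ => ?_
  exact hM.diag_nonneg

private lemma trace_mul_nonneg' {M N : Matrix (Fin n) (Fin n) ℂ}
    (hM : M.PosSemidef) (hN : N.PosSemidef) : 0 ≤ (M * N).trace := by
  obtain ⟨S, hS, hSM⟩ : ∃ S : Matrix (Fin n) (Fin n) ℂ, S.PosSemidef ∧ S * S = M :=
    open scoped MatrixOrder in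
    ⟨CFC.sqrt M, (CFC.sqrt_nonneg M).posSemidef, CFC.sqrt_mul_sqrt_self M hM.nonneg⟩
  rw [← hSM, Matrix.mul_assoc, Matrix.trace_mul_comm]
  have h2 := hN.mul_mul_conjTranspose_same S
  rw [hS.isHermitian.eq] at h2
  exact trace_nonneg' h2

private lemma sandwich_posSemidef {M P : Matrix (Fin n) (Fin n) ℂ}
    (hM : M.PosSemidef) (hP : P.IsHermitian) : (P * M * P).PosSemidef := by
  have h := hM.mul_mul_conjTranspose_same P
  rwa [hP.eq] at h

private lemma inv_sub_inv_eq {M N : Matrix (Fin n) (Fin n) ℂ}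
    (hM : M.PosDef) (hN : N.PosDef) : N⁻¹ - M⁻¹ = N⁻¹ * (M - N) * M⁻¹ := by
  have hMd : IsUnit M.det := (Matrix.isUnit_iff_isUnit_det _).mp hM.isUnit
  have hNd : IsUnit N.det := (Matrix.isUnit_iff_isUnit_det _).mp hN.isUnit
  rw [mul_sub, sub_mul, Matrix.nonsing_inv_mul _ hNd, one_mul,
    Matrix.mul_assoc, Matrix.mul_nonsing_inv _ hMd, mul_one]

set_option maxHeartbeats 1000000 in
/-- Antitonicity of the matrix inverse: `(B+D)⁻¹ ≤ B⁻¹` for `B` pos. def., `D` pos. semidef. -/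
private lemma inv_sub_inv_posSemidef {B D : Matrix (Fin n) (Fin n) ℂ}
    (hB : B.PosDef) (hD : D.PosSemidef) : (B⁻¹ - (B + D)⁻¹).PosSemidef := by
  have hY : (B + D).PosDef := hB.add_posSemidef hD
  have hBd : IsUnit B.det := (Matrix.isUnit_iff_isUnit_det _).mp hB.isUnit
  have hYd : IsUnit (B + D).det := (Matrix.isUnit_iff_isUnit_det _).mp hY.isUnit
  have h1 : B⁻¹ - (B + D)⁻¹ = (B + D)⁻¹ * D * B⁻¹ := by
    have h := inv_sub_inv_eq hB hY
    rw [show B - (B + D) = -D from by abel, Matrix.mul_neg, Matrix.neg_mul] at h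
    calc B⁻¹ - (B + D)⁻¹ = -((B + D)⁻¹ - B⁻¹) := by abel
    _ = (B + D)⁻¹ * D * B⁻¹ := by rw [h, neg_neg]
  have p1 : ((B + D)⁻¹ * D * (B + D)⁻¹).PosSemidef := by
    have h := hD.mul_mul_conjTranspose_same (B + D)⁻¹
    rwa [hY.isHermitian.inv.eq] at h
  have p2 : ((B + D)⁻¹ * D * B⁻¹ * (D * (B + D)⁻¹)).PosSemidef := by
    have h := hB.inv.posSemidef.mul_mul_conjTranspose_same ((B + D)⁻¹ * D)
    rwa [Matrix.conjTranspose_mul, hY.isHermitian.inv.eq, hD.isHermitian.eq] at h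
  have key : B⁻¹ - (B + D)⁻¹
      = (B + D)⁻¹ * D * (B + D)⁻¹ + (B + D)⁻¹ * D * B⁻¹ * (D * (B + D)⁻¹) := by
    rw [h1]
    have e1 : (B + D)⁻¹ * D * B⁻¹ = (B + D)⁻¹ * D * B⁻¹ * ((B + D) * (B + D)⁻¹) := by
      rw [Matrix.mul_nonsing_inv _ hYd, mul_one]
    conv_lhs => rw [e1]
    rw [add_mul, mul_add]
    congr 1
    rw [← Matrix.mul_assoc, Matrix.mul_assoc ((B + D)⁻¹ * D) B⁻¹ B,
      Matrix.nonsing_inv_mul _ hBd, mul_one]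
  rw [key]
  exact p1.add p2

private lemma star_trace_mul {M N : Matrix (Fin n) (Fin n) ℂ}
    (hM : M.IsHermitian) (hN : N.IsHermitian) :
    star ((M * N).trace) = (M * N).trace := by
  rw [← Matrix.trace_conjTranspose, Matrix.conjTranspose_mul, hM.eq, hN.eq,
    Matrix.trace_mul_comm]

end Aux

set_option maxHeartbeats 1000000 in
theorem stmt_6 {n : ℕ} (A B C D : Matrix (Fin n) (Fin n) ℂ)
    (hA : A.PosDef) (hB : B.PosDef) (hC : C.PosSemidef) (hD : D.PosSemidef) :
    0 ≤ ((A - B) * (B⁻¹ - A⁻¹) + (C - D) * ((B + D)⁻¹ - (A + C)⁻¹)).trace := by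
  have hX : (A + C).PosDef := hA.add_posSemidef hC
  have hY : (B + D).PosDef := hB.add_posSemidef hD
  have hiA : (A⁻¹).PosSemidef := hA.inv.posSemidef
  have hiB : (B⁻¹).PosSemidef := hB.inv.posSemidef
  have hiX : ((A + C)⁻¹).PosSemidef := hX.inv.posSemidef
  have hiY : ((B + D)⁻¹).PosSemidef := hY.inv.posSemidef
  have hP : (A - B).IsHermitian := hA.isHermitian.sub hB.isHermitian
  have hQ : (C - D).IsHermitian := hC.isHermitian.sub hD.isHermitian
  have hPQ : (A - B + (C - D)).IsHermitian := hP.add hQ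
  set T : ℂ := ((A - B) * (B⁻¹ - A⁻¹) + (C - D) * ((B + D)⁻¹ - (A + C)⁻¹)).trace with hTdef
  set t1 : ℂ := ((A - B) * B⁻¹ * (A - B) * A⁻¹).trace with ht1
  set t2 : ℂ := ((C - D) * (B + D)⁻¹ * (C - D) * (A + C)⁻¹).trace with ht2
  set t3 : ℂ := ((A - B) * (B + D)⁻¹ * (A - B) * (A + C)⁻¹).trace with ht3
  set c : ℂ := ((C - D) * (B + D)⁻¹ * (A - B) * (A + C)⁻¹).trace with hc
  set c' : ℂ := ((A - B) * (B + D)⁻¹ * (C - D) * (A + C)⁻¹).trace with hc'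
  set u1 : ℂ := ((A - B) * (B⁻¹ - (B + D)⁻¹) * (A - B) * A⁻¹).trace with hu1
  set u2 : ℂ := ((A - B) * (B + D)⁻¹ * (A - B) * (A⁻¹ - (A + C)⁻¹)).trace with hu2
  set s : ℂ := ((A - B + (C - D)) * (B + D)⁻¹ * (A - B + (C - D)) * (A + C)⁻¹).trace with hs
  have eYX : (B + D)⁻¹ - (A + C)⁻¹ = (B + D)⁻¹ * (A - B + (C - D)) * (A + C)⁻¹ := by
    have h := inv_sub_inv_eq hX hY
    rwa [show A + C - (B + D) = A - B + (C - D) from by abel] at h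
  -- F1 : expansion of T
  have F1 : T = t1 + c + t2 := by
    rw [hTdef, ht1, hc, ht2,
      show (A - B) * (B⁻¹ - A⁻¹) + (C - D) * ((B + D)⁻¹ - (A + C)⁻¹)
        = (A - B) * B⁻¹ * (A - B) * A⁻¹
          + ((C - D) * (B + D)⁻¹ * (A - B) * (A + C)⁻¹
            + (C - D) * (B + D)⁻¹ * (C - D) * (A + C)⁻¹) from by
        rw [inv_sub_inv_eq hA hB, eYX]; noncomm_ring,
      Matrix.trace_add, Matrix.trace_add]
    ring
  -- T is real
  have hH1 : (B⁻¹ - A⁻¹).IsHermitian := hB.isHermitian.inv.sub hA.isHermitian.inv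
  have hH2 : ((B + D)⁻¹ - (A + C)⁻¹).IsHermitian := hY.isHermitian.inv.sub hX.isHermitian.inv
  have hTstar : star T = T := by
    rw [hTdef, ← Matrix.trace_conjTranspose, Matrix.conjTranspose_add,
      Matrix.conjTranspose_mul, Matrix.conjTranspose_mul, hP.eq, hQ.eq, hH1.eq, hH2.eq,
      Matrix.trace_add, Matrix.trace_add,
      Matrix.trace_mul_comm (B⁻¹ - A⁻¹) (A - B),
      Matrix.trace_mul_comm ((B + D)⁻¹ - (A + C)⁻¹) (C - D)]
  -- star of cross term
  have F2 : star c = c' := by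
    rw [hc, hc', ← Matrix.trace_conjTranspose, Matrix.conjTranspose_mul,
      Matrix.conjTranspose_mul, Matrix.conjTranspose_mul, hP.eq, hQ.eq,
      hiX.isHermitian.eq, hiY.isHermitian.eq, Matrix.trace_mul_comm]
    congr 1
    noncomm_ring
  -- self-adjointness of the diagonal terms
  have st1 : star t1 = t1 := by
    rw [ht1]
    exact star_trace_mul (sandwich_posSemidef hiB hP).isHermitian hiA.isHermitian
  have st2 : star t2 = t2 := by
    rw [ht2]
    exact star_trace_mul (sandwich_posSemidef hiY hQ).isHermitian hiX.isHermitian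
  -- second expansion of T
  have hT2 : T = t1 + c' + t2 := by
    conv_lhs => rw [← hTstar, F1]
    rw [star_add, star_add, st1, st2, F2]
  -- F3 : splitting of t1
  have F3 : t1 = t3 + u1 + u2 := by
    rw [ht1, ht3, hu1, hu2, ← Matrix.trace_add, ← Matrix.trace_add]
    congr 1
    noncomm_ring
  -- F4 : expansion of s
  have F4 : s = t3 + c' + c + t2 := by
    rw [hs, ht3, hc', hc, ht2, ← Matrix.trace_add, ← Matrix.trace_add, ← Matrix.trace_add]
    congr 1
    noncomm_ring
  have hsum : T + T = t1 + t2 + u1 + u2 + s := by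
    linear_combination F1 + hT2 + F3 - F4
  -- positivity of each summand
  have pt1 : 0 ≤ t1 := by
    rw [ht1]; exact trace_mul_nonneg' (sandwich_posSemidef hiB hP) hiA
  have pt2 : 0 ≤ t2 := by
    rw [ht2]; exact trace_mul_nonneg' (sandwich_posSemidef hiY hQ) hiX
  have pu1 : 0 ≤ u1 := by
    rw [hu1]
    exact trace_mul_nonneg' (sandwich_posSemidef (inv_sub_inv_posSemidef hB hD) hP) hiA
  have pu2 : 0 ≤ u2 := by
    rw [hu2]
    exact trace_mul_nonneg' (sandwich_posSemidef hiY hP) (inv_sub_inv_posSemidef hA hC)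
  have ps : 0 ≤ s := by
    rw [hs]; exact trace_mul_nonneg' (sandwich_posSemidef hiY hPQ) hiX
  have h2 : 0 ≤ T + T := by
    rw [hsum]
    exact add_nonneg (add_nonneg (add_nonneg (add_nonneg pt1 pt2) pu1) pu2) ps
  rw [Complex.le_def] at h2 ⊢
  simp only [Complex.add_re, Complex.add_im, Complex.zero_re, Complex.zero_im] at h2 ⊢
  exact ⟨by linarith [h2.1], by linarith [h2.2]⟩
end
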